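/- Let S ⊆ ℝ be nonempty and bounded, and suppose that for each s ∈ S there exists δ > 0 such that [s, s+δ) ⊆ S. Then S is Lebesgue measurable and has positive Lebesgue measure. -/
import Mathlib


open Set MeasureTheory

theorem stmt_5 (S : Set ℝ) (hne : S.Nonempty) (hbdd : Bornology.IsBounded S)
    (h : ∀ s ∈ S, ∃ δ > 0, Ico s (s + δ) ⊆ S) :
    NullMeasurableSet S volume ∧ 0 < volume S := by
  classical
  choose! δ hδpos hδsub using h
  have hIoo : ∀ s ∈ S, Ioo s (s + δ s) ⊆ interior S := fun s hs =>
    (isOpen_Ioo.subset_interior_iff).2 ((Ioo_subset_Ico_self).trans (hδsub s hs))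
  set T := S \ interior S with hT
  have hTc : T.Countable := by
    have key : ∀ a ∈ T, ∀ b ∈ T, a < b →
        Disjoint (Ioo a (a + δ a)) (Ioo b (b + δ b)) := by
      intro a ha b hb hlt
      have hbd : b ∉ Ioo a (a + δ a) := fun hmem => hb.2 (hIoo a ha.1 hmem)
      have hle : a + δ a ≤ b := by
        rcases le_or_gt (a + δ a) b with h1 | h1
        · exact h1
        · exact absurd ⟨hlt, h1⟩ hbd
      refine Set.disjoint_left.2 fun x hx hx' => ?_
      linarith [hx.2, hx'.1]
    apply Set.PairwiseDisjoint.countable_of_Ioo (y := fun s => s + δ s)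
    · intro a ha b hb hab
      rcases hab.lt_or_gt with hlt | hlt
      · exact key a ha b hb hlt
      · exact (key b hb a ha hlt).symm
    · intro a ha
      linarith [hδpos a ha.1]
  have hSeq : S = interior S ∪ T := by
    rw [hT, union_diff_self, union_eq_self_of_subset_left interior_subset]
  have hmeas : MeasurableSet S := by
    rw [hSeq]
    exact isOpen_interior.measurableSet.union hTc.measurableSet
  refine ⟨hmeas.nullMeasurableSet, ?_⟩
  obtain ⟨s, hs⟩ := hne
  calc (0 : ENNReal) < volume (Ico s (s + δ s)) := by
        rw [Real.volume_Ico]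
        simp [ENNReal.ofReal_pos, hδpos s hs]
     _ ≤ volume S := measure_mono (hδsub s hs)
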